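/- For all integers t ≥ 2 and ω with (t + 1)/2 ≤ ω ≤ t and ω ≥ 2, there exists a finite simple graph G of treewidth exactly t and clique number exactly ω satisfying χ_f(G) ≥ t + 1 − Σ_{i=1}^{t−ω+1} 1/(ω − i + 1). -/

import Mathlib

open MeasureTheory ENNReal

/-- `H` (a graph on vertex set `Fin n`) is a `t`-tree, witnessed by the natural ordering of
`Fin n`: the first `t` vertices form a clique, and every later vertex has a backward
neighborhood that is a clique on exactly `t` vertices. -/
def IsTTree (t n : ℕ) (H : SimpleGraph (Fin n)) : Prop :=
  t ≤ n ∧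
  (∀ i j : Fin n, (i : ℕ) < t → (j : ℕ) < t → i ≠ j → H.Adj i j) ∧
  ∀ i : Fin n, t ≤ (i : ℕ) →
    H.IsClique {j : Fin n | j < i ∧ H.Adj i j} ∧ {j : Fin n | j < i ∧ H.Adj i j}.ncard = t

/-- `G` has treewidth at most `t`, i.e. `G` is a partial `t`-tree: a subgraph of some `t`-tree. -/
def TreewidthAtMost {V : Type} (G : SimpleGraph V) (t : ℕ) : Prop :=
  ∃ (n : ℕ) (H : SimpleGraph (Fin n)) (f : V → Fin n),
    IsTTree t n H ∧ Function.Injective f ∧ ∀ u v : V, G.Adj u v → H.Adj (f u) (f v)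

/-- A fractional coloring of `G`: each vertex gets a measurable subset of `ℝ` of Lebesgue
measure `1`, with adjacent vertices receiving disjoint sets. -/
def IsFracColoring {V : Type} (G : SimpleGraph V) (φ : V → Set ℝ) : Prop :=
  (∀ v, MeasurableSet (φ v)) ∧ (∀ v, volume (φ v) = 1) ∧
  ∀ u v : V, G.Adj u v → φ u ∩ φ v = ∅

/-- The fractional chromatic number of `G`: the infimum over all fractional colorings of the
Lebesgue measure of the union of all color sets. -/
noncomputable def fracChromNum {V : Type} (G : SimpleGraph V) : ℝ≥0∞ :=
  ⨅ (φ : V → Set ℝ) (_ : IsFracColoring G φ), volume (⋃ v : V, φ v)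




/-! ### The recursive gadget -/

@[reducible] def GV : ℕ → ℕ → Type
  | 0, ω => Fin ω
  | (k+1), ω => (Fin ω ⊕ Unit) ⊕ (Fin ω × GV k (ω-1))

instance GV.decEq : ∀ k ω, DecidableEq (GV k ω)
  | 0, ω => inferInstanceAs (DecidableEq (Fin ω))
  | (k+1), ω =>
    have := GV.decEq k (ω-1)
    inferInstanceAs (DecidableEq ((Fin ω ⊕ Unit) ⊕ (Fin ω × GV k (ω-1))))

instance GV.fintype : ∀ k ω, Fintype (GV k ω)
  | 0, ω => inferInstanceAs (Fintype (Fin ω))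
  | (k+1), ω =>
    have := GV.fintype k (ω-1)
    inferInstanceAs (Fintype ((Fin ω ⊕ Unit) ⊕ (Fin ω × GV k (ω-1))))

def gadAdj : ∀ (k ω : ℕ), GV k ω → GV k ω → Prop
  | 0, _ω => fun a b => a ≠ b
  | (k+1), ω => fun a b =>
    match a, b with
    | .inl (.inl i), .inl (.inl j) => i ≠ j
    | .inl (.inl i), .inr p => i = p.1
    | .inr p, .inl (.inl i) => i = p.1
    | .inl (.inr _), .inr _ => True
    | .inr _, .inl (.inr _) => True
    | .inr p, .inr q => p.1 = q.1 ∧ gadAdj k (ω-1) p.2 q.2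
    | _, _ => False

lemma gadAdj_symm : ∀ k ω (a b : GV k ω), gadAdj k ω a b → gadAdj k ω b a
  | 0, _, a, b, h => fun hh => h hh.symm
  | (k+1), ω, a, b, h => by
    rcases a with (i | _) | p <;> rcases b with (j | _) | q <;>
      simp only [gadAdj] at h ⊢
    · exact h.symm
    · exact h
    · exact h
    · exact ⟨h.1.symm, gadAdj_symm k (ω-1) _ _ h.2⟩

lemma gadAdj_irrefl : ∀ k ω (a : GV k ω), ¬ gadAdj k ω a a
  | 0, _, a => by simp [gadAdj]
  | (k+1), ω, a => by
    rcases a with (i | u) | p <;> simp only [gadAdj]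
    · simp
    · simp
    · exact fun h => gadAdj_irrefl k (ω-1) p.2 h.2

def gad (k ω : ℕ) : SimpleGraph (GV k ω) where
  Adj := gadAdj k ω
  symm := ⟨fun a b h => gadAdj_symm k ω a b h⟩
  loopless := ⟨fun a h => gadAdj_irrefl k ω a h⟩

@[simp] lemma gad_adj_zero (ω : ℕ) (a b : GV 0 ω) : (gad 0 ω).Adj a b ↔ a ≠ b := Iff.rfl

-- abbreviations for the (k+1) case constructors
@[simp] lemma gad_adj_core_core (k ω : ℕ) (i j : Fin ω) :
    (gad (k+1) ω).Adj (.inl (.inl i)) (.inl (.inl j)) ↔ i ≠ j := Iff.rfl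
@[simp] lemma gad_adj_core_hub (k ω : ℕ) (i : Fin ω) (u : Unit) :
    ¬ (gad (k+1) ω).Adj (.inl (.inl i)) (.inl (.inr u)) := fun h => h
@[simp] lemma gad_adj_hub_core (k ω : ℕ) (i : Fin ω) (u : Unit) :
    ¬ (gad (k+1) ω).Adj (.inl (.inr u)) (.inl (.inl i)) := fun h => h
@[simp] lemma gad_adj_hub_hub (k ω : ℕ) (u u' : Unit) :
    ¬ (gad (k+1) ω).Adj (.inl (.inr u)) (.inl (.inr u')) := fun h => h
@[simp] lemma gad_adj_core_child (k ω : ℕ) (i : Fin ω) (p : Fin ω × GV k (ω-1)) :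
    (gad (k+1) ω).Adj (.inl (.inl i)) (.inr p) ↔ i = p.1 := Iff.rfl
@[simp] lemma gad_adj_child_core (k ω : ℕ) (i : Fin ω) (p : Fin ω × GV k (ω-1)) :
    (gad (k+1) ω).Adj (.inr p) (.inl (.inl i)) ↔ i = p.1 := Iff.rfl
@[simp] lemma gad_adj_hub_child (k ω : ℕ) (u : Unit) (p : Fin ω × GV k (ω-1)) :
    (gad (k+1) ω).Adj (.inl (.inr u)) (.inr p) := trivial
@[simp] lemma gad_adj_child_hub (k ω : ℕ) (u : Unit) (p : Fin ω × GV k (ω-1)) :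
    (gad (k+1) ω).Adj (.inr p) (.inl (.inr u)) := trivial
@[simp] lemma gad_adj_child_child (k ω : ℕ) (p q : Fin ω × GV k (ω-1)) :
    (gad (k+1) ω).Adj (.inr p) (.inr q) ↔ p.1 = q.1 ∧ (gad k (ω-1)).Adj p.2 q.2 := Iff.rfl

/-! ### Layouts: elimination layouts with explicit backward sets -/

structure Layout (t : ℕ) {V : Type} (G : SimpleGraph V) where
  n : ℕ
  f : V → ℕ
  B : ℕ → Finset ℕ
  htn : t ≤ n
  hf : ∀ v, f v < n
  hinj : Function.Injective f
  hlow : ∀ i, i < t → B i = ∅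
  hcard : ∀ i, t ≤ i → i < n → (B i).card = t
  hlt : ∀ i, t ≤ i → i < n → ∀ j ∈ B i, j < i
  hcl : ∀ i, t ≤ i → i < n → ∀ j ∈ B i, ∀ j' ∈ B i, j < j' → (j' < t ∨ j ∈ B j')
  hedge : ∀ u v, G.Adj u v → f u < f v → (f u < t ∧ f v < t) ∨ f u ∈ B (f v)

theorem Layout.tw {t : ℕ} {V : Type} {G : SimpleGraph V} (L : Layout t G) :
    TreewidthAtMost G t := by
  classical
  let H : SimpleGraph (Fin L.n) :=
    { Adj := fun a b => a ≠ b ∧ (((a:ℕ) < t ∧ (b:ℕ) < t) ∨ (a:ℕ) ∈ L.B b ∨ (b:ℕ) ∈ L.B a)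
      symm := ⟨by rintro a b ⟨hab, h⟩; exact ⟨hab.symm, by tauto⟩⟩
      loopless := ⟨by rintro a ⟨ha, _⟩; exact ha rfl⟩ }
  have Hadj : ∀ a b : Fin L.n, H.Adj a b ↔
      (a ≠ b ∧ (((a:ℕ) < t ∧ (b:ℕ) < t) ∨ (a:ℕ) ∈ L.B b ∨ (b:ℕ) ∈ L.B a)) := by
    intro a b; rfl
  refine ⟨L.n, H, fun v => ⟨L.f v, L.hf v⟩, ⟨L.htn, ?_, ?_⟩, ?_, ?_⟩
  · intro i j hi hj hij
    exact (Hadj i j).mpr ⟨hij, Or.inl ⟨hi, hj⟩⟩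
  · intro i hi
    have hBsub : ∀ j ∈ L.B i, j < L.n := by
      intro j hj
      exact lt_trans (L.hlt i hi i.isLt j hj) i.isLt
    have hset : {j : Fin L.n | j < i ∧ H.Adj i j} = ↑((L.B i).attachFin hBsub) := by
      ext j
      simp only [Set.mem_setOf_eq, Finset.coe_sort_coe, Finset.mem_coe,
        Finset.mem_attachFin]
      constructor
      · rintro ⟨hji, _, (⟨h1, _⟩ | h2 | h3)⟩
        · have : (j:ℕ) < (i:ℕ) := hji
          omega
        · by_cases hjt : (j:ℕ) < t
          · rw [L.hlow _ hjt] at h2; simp at h2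
          · have := L.hlt j (le_of_not_gt hjt) j.isLt _ h2
            have hji' : (j:ℕ) < (i:ℕ) := hji
            omega
        · exact h3
      · intro hj
        have hji : (j:ℕ) < (i:ℕ) := L.hlt i hi i.isLt _ hj
        refine ⟨hji, ?_, Or.inr (Or.inr hj)⟩
        intro hc; rw [hc] at hji; exact lt_irrefl _ hji
    rw [hset]
    constructor
    · intro a ha b hb hab
      simp only [Finset.coe_sort_coe, Finset.mem_coe, Finset.mem_attachFin] at ha hb
      rw [Hadj]
      refine ⟨hab, ?_⟩
      rcases lt_trichotomy (a:ℕ) (b:ℕ) with hlt' | heq | hgt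
      · rcases L.hcl i hi i.isLt _ ha _ hb hlt' with h | h
        · exact Or.inl ⟨lt_trans hlt' h, h⟩
        · exact Or.inr (Or.inl h)
      · exact absurd (Fin.ext heq) hab
      · rcases L.hcl i hi i.isLt _ hb _ ha hgt with h | h
        · exact Or.inl ⟨h, lt_trans hgt h⟩
        · exact Or.inr (Or.inr h)
    · rw [Set.ncard_coe_finset, Finset.card_attachFin]
      exact L.hcard i hi i.isLt
  · intro u v huv
    have : L.f u = L.f v := by simpa using congrArg Fin.val huv
    exact L.hinj this
  · intro u v huv
    have hne : L.f u ≠ L.f v := fun h => (G.ne_of_adj huv) (L.hinj h)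
    rw [Hadj]
    have hne' : (⟨L.f u, L.hf u⟩ : Fin L.n) ≠ ⟨L.f v, L.hf v⟩ := by
      intro h; exact hne (by simpa using congrArg Fin.val h)
    rcases lt_or_gt_of_ne hne with h | h
    · rcases L.hedge u v huv h with ⟨h1, h2⟩ | h3
      · exact ⟨hne', Or.inl ⟨h1, h2⟩⟩
      · exact ⟨hne', Or.inr (Or.inl h3)⟩
    · rcases L.hedge v u huv.symm h with ⟨h1, h2⟩ | h3
      · exact ⟨hne', Or.inl ⟨h2, h1⟩⟩
      · exact ⟨hne', Or.inr (Or.inr h3)⟩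

/-! ### Numerics -/

def Mw : ℕ → ℕ → ℕ
  | 0, _ => 1
  | (k+1), ω => ω * Mw k (ω-1)

def Nw : ℕ → ℕ → ℕ
  | 0, ω => ω
  | (k+1), ω => (2*ω-1) * Mw k (ω-1) + ω * Nw k (ω-1)

lemma Mw_pos : ∀ k ω, k ≤ ω → 0 < Mw k ω
  | 0, _, _ => Nat.one_pos
  | (k+1), ω, h => by
    have h1 : k ≤ ω - 1 := by omega
    have := Mw_pos k (ω-1) h1
    have hω : 0 < ω := by omega
    simp only [Mw]
    exact Nat.mul_pos hω this

lemma NM_ident : ∀ k ω, k ≤ ω →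
    (Nw k ω : ℝ) = (Mw k ω : ℝ) *
      ((ω : ℝ) + k - ∑ j ∈ Finset.Icc (ω - k + 1) ω, (1 : ℝ) / j)
  | 0, ω, _ => by
    have : Finset.Icc (ω + 1) ω = ∅ := by
      rw [Finset.Icc_eq_empty_iff]; omega
    simp [Nw, Mw, this]
  | (k+1), ω, h => by
    have hω1 : 1 ≤ ω := by omega
    have hk : k ≤ ω - 1 := by omega
    have IH := NM_ident k (ω-1) hk
    have hidx : (ω - 1) - k + 1 = ω - k := by omega
    rw [hidx] at IH
    have hsplit : ∑ j ∈ Finset.Icc (ω - (k+1) + 1) ω, (1 : ℝ) / j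
        = (∑ j ∈ Finset.Icc (ω - k) (ω-1), (1 : ℝ) / j) + 1 / ω := by
      have h1 : ω - (k+1) + 1 = ω - k := by omega
      have h2 : ω = (ω - 1) + 1 := by omega
      rw [h1, h2, Finset.sum_Icc_succ_top (by omega)]
      rw [← h2]
    have hMpos : (0:ℝ) < (Mw k (ω-1) : ℝ) := by
      exact_mod_cast Mw_pos k (ω-1) hk
    have hωR : ((ω:ℕ) : ℝ) ≠ 0 := by
      simp only [ne_eq, Nat.cast_eq_zero]; omega
    have hNcast : (Nw (k+1) ω : ℝ) = ((2*ω-1 : ℕ) : ℝ) * (Mw k (ω-1) : ℝ)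
        + (ω : ℝ) * (Nw k (ω-1) : ℝ) := by
      simp [Nw]
    have h2ω : ((2*ω-1 : ℕ) : ℝ) = 2*(ω:ℝ) - 1 := by
      push_cast [Nat.cast_sub (by omega : 1 ≤ 2*ω)]; ring
    have hω1R : ((ω - 1 : ℕ) : ℝ) = (ω : ℝ) - 1 := by
      push_cast [Nat.cast_sub hω1]; ring
    rw [hNcast, h2ω, IH, hω1R, hsplit]
    have : (Mw (k+1) ω : ℝ) = (ω : ℝ) * (Mw k (ω-1) : ℝ) := by
      simp [Mw]
    rw [this]
    push_cast
    field_simp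
    ring

/-! ### Weight certificates -/

lemma gad_weights : ∀ k ω, k ≤ ω → ∃ w : GV k ω → ℕ,
    (∀ S : Finset (GV k ω), (∀ u ∈ S, ∀ v ∈ S, ¬ (gad k ω).Adj u v) →
      ∑ v ∈ S, w v ≤ Mw k ω) ∧ (∑ v, w v) = Nw k ω
  | 0, ω, _ => by
    classical
    refine ⟨fun _ => 1, ?_, ?_⟩
    · intro S hS
      have : S.card ≤ 1 := by
        rw [Finset.card_le_one]
        intro a ha b hb
        by_contra hne
        exact hS a ha b hb hne
      simpa [Mw] using this
    · simp only [Finset.sum_const, smul_eq_mul, mul_one, Finset.card_univ, Nw]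
      exact Fintype.card_fin ω
  | (k+1), ω, h => by
    classical
    have hk : k ≤ ω - 1 := by omega
    have hω : 1 ≤ ω := by omega
    obtain ⟨w', hw'ind, hw'tot⟩ := gad_weights k (ω-1) hk
    set M' := Mw k (ω-1) with hM'
    refine ⟨fun v => match v with
      | .inl (.inl _) => M'
      | .inl (.inr _) => (ω-1) * M'
      | .inr p => w' p.2, ?_, ?_⟩
    · intro S hS
      set w : GV (k+1) ω → ℕ := fun v => match v with
        | .inl (.inl _) => M'
        | .inl (.inr _) => (ω-1) * M'
        | .inr p => w' p.2 with hw
      show ∑ v ∈ S, w v ≤ Mw (k+1) ω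
      have hsum : ∑ v ∈ S, w v = ∑ v : GV (k+1) ω, (if v ∈ S then w v else 0) := by
        rw [Finset.sum_ite_mem, Finset.univ_inter]
      set f : GV (k+1) ω → ℕ := fun v => if v ∈ S then w v else 0 with hf
      have e1 : (∑ v : GV (k+1) ω, f v) =
          ∑ v : (Fin ω ⊕ Unit) ⊕ (Fin ω × GV k (ω-1)), f v := rfl
      have hsplit : ∑ v : GV (k+1) ω, f v =
          ((∑ i : Fin ω, f (.inl (.inl i))) + f (.inl (.inr ()))) +
          ∑ c : Fin ω, ∑ x : GV k (ω-1), f (.inr (c, x)) := by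
        rw [e1, Fintype.sum_sum_type, Fintype.sum_sum_type, Fintype.sum_prod_type]
        congr 1
      -- child sums
      have hchild : ∀ c : Fin ω,
          ∑ x : GV k (ω-1), f (.inr (c, x)) =
            ∑ x ∈ Finset.univ.filter (fun x => (Sum.inr (c, x) : GV (k+1) ω) ∈ S), w' x := by
        intro c
        rw [Finset.sum_filter]
      have hchild_le : ∀ c : Fin ω, ∑ x : GV k (ω-1), f (.inr (c, x)) ≤ M' := by
        intro c
        rw [hchild c]
        apply hw'ind
        intro u hu v hv hadj
        simp only [Finset.mem_filter] at hu hv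
        exact hS _ hu.2 _ hv.2 ⟨rfl, hadj⟩
      have hchild_zero_of : ∀ c : Fin ω, (Sum.inl (Sum.inl c) : GV (k+1) ω) ∈ S →
          ∑ x : GV k (ω-1), f (.inr (c, x)) = 0 := by
        intro c hc
        rw [hchild c]
        have : Finset.univ.filter (fun x => (Sum.inr (c, x) : GV (k+1) ω) ∈ S) = ∅ := by
          rw [Finset.filter_eq_empty_iff]
          intro x _ hx
          exact hS _ hc _ hx rfl
        simp [this]
      -- core terms
      have hcore_le : ∀ c : Fin ω, f (.inl (.inl c)) ≤ if (Sum.inl (Sum.inl c) : GV (k+1) ω) ∈ S then M' else 0 := by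
        intro c
        simp only [hf]
        split <;> simp [hw]
      rw [hsum, hsplit]
      by_cases hhub : (Sum.inl (Sum.inr ()) : GV (k+1) ω) ∈ S
      · -- hub present: no children at all
        have hch0 : ∀ c : Fin ω, ∑ x : GV k (ω-1), f (.inr (c, x)) = 0 := by
          intro c
          rw [hchild c]
          have : Finset.univ.filter (fun x => (Sum.inr (c, x) : GV (k+1) ω) ∈ S) = ∅ := by
            rw [Finset.filter_eq_empty_iff]
            intro x _ hx
            exact hS _ hhub _ hx trivial
          simp [this]
        have hcoresum : ∑ i : Fin ω, f (.inl (.inl i)) ≤ M' := by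
          have hone : ∀ a ∈ Finset.univ.filter
              (fun i : Fin ω => (Sum.inl (Sum.inl i) : GV (k+1) ω) ∈ S), ∀ b ∈ Finset.univ.filter
              (fun i : Fin ω => (Sum.inl (Sum.inl i) : GV (k+1) ω) ∈ S), a = b := by
            intro a ha b hb
            simp only [Finset.mem_filter] at ha hb
            by_contra hne
            exact hS _ ha.2 _ hb.2 hne
          calc ∑ i : Fin ω, f (.inl (.inl i))
              = ∑ i ∈ Finset.univ.filter (fun i : Fin ω => (Sum.inl (Sum.inl i) : GV (k+1) ω) ∈ S), M' := by
                rw [Finset.sum_filter]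
            _ ≤ 1 * M' := by
                rw [Finset.sum_const, smul_eq_mul]
                apply Nat.mul_le_mul_right
                exact Finset.card_le_one.mpr hone
            _ = M' := one_mul M'
        have hhubval : f (.inl (.inr ())) = (ω-1) * M' := by simp [hf, hhub, hw]
        have hch0' : (∑ c : Fin ω, ∑ x : GV k (ω-1), f (.inr (c, x))) = 0 :=
          Finset.sum_eq_zero (fun c _ => hch0 c)
        calc (∑ i : Fin ω, f (.inl (.inl i))) + f (.inl (.inr ())) +
              ∑ c : Fin ω, ∑ x : GV k (ω-1), f (.inr (c, x))
            ≤ M' + (ω-1) * M' + 0 :=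
              Nat.add_le_add (Nat.add_le_add hcoresum (le_of_eq hhubval)) (le_of_eq hch0')
          _ = (1 + (ω-1)) * M' := by ring
          _ = ω * M' := by rw [show 1 + (ω - 1) = ω from by omega]
          _ = Mw (k+1) ω := by simp [Mw, hM']
      · -- no hub
        have hhubval : f (.inl (.inr ())) = 0 := by simp [hf, hhub]
        have hperc : ∀ c : Fin ω, f (.inl (.inl c)) + ∑ x : GV k (ω-1), f (.inr (c, x)) ≤ M' := by
          intro c
          by_cases hc : (Sum.inl (Sum.inl c) : GV (k+1) ω) ∈ S
          · rw [hchild_zero_of c hc]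
            have := hcore_le c
            simp only [hc, if_pos] at this
            omega
          · have hcz : f (.inl (.inl c)) = 0 := by simp [hf, hc]
            rw [hcz, Nat.zero_add]
            exact hchild_le c
        calc (∑ i : Fin ω, f (.inl (.inl i))) + f (.inl (.inr ())) +
              ∑ c : Fin ω, ∑ x : GV k (ω-1), f (.inr (c, x))
            = ∑ c : Fin ω, (f (.inl (.inl c)) + ∑ x : GV k (ω-1), f (.inr (c, x))) := by
              rw [hhubval, Finset.sum_add_distrib]; omega
          _ ≤ ∑ _c : Fin ω, M' := Finset.sum_le_sum (fun c _ => hperc c)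
          _ = ω * M' := by rw [Finset.sum_const, Finset.card_univ, Fintype.card_fin, smul_eq_mul]
          _ = Mw (k+1) ω := by simp [Mw, hM']
    · set w : GV (k+1) ω → ℕ := fun v => match v with
        | .inl (.inl _) => M'
        | .inl (.inr _) => (ω-1) * M'
        | .inr p => w' p.2 with hw
      have e1 : (∑ v : GV (k+1) ω, w v) =
          ∑ v : (Fin ω ⊕ Unit) ⊕ (Fin ω × GV k (ω-1)), w v := rfl
      rw [e1, Fintype.sum_sum_type, Fintype.sum_sum_type, Fintype.sum_prod_type]
      have h1 : (∑ i : Fin ω, w (.inl (.inl i))) = ω * M' := by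
        simp only [hw]
        rw [Finset.sum_const, Finset.card_univ, Fintype.card_fin, smul_eq_mul]
      have h1b : (∑ u : Unit, w (.inl (.inr u))) = (ω-1) * M' := by
        simp [hw]
      have h2 : (∑ c : Fin ω, ∑ x : GV k (ω-1), w (.inr (c, x))) = ω * Nw k (ω-1) := by
        have : ∀ c : Fin ω, (∑ x : GV k (ω-1), w (.inr (c, x))) = Nw k (ω-1) := by
          intro c
          simpa [hw] using hw'tot
        rw [Finset.sum_congr rfl (fun c _ => this c), Finset.sum_const,
          Finset.card_univ, Fintype.card_fin, smul_eq_mul]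
      rw [h1, h1b, h2]
      have h3 : ω * M' + (ω-1) * M' = (2*ω-1) * M' := by
        rw [← Nat.add_mul]
        congr 1
        omega
      simp only [Nw, ← hM']
      omega

/-! ### Weighted fractional-clique lower bound on the fractional chromatic number -/

lemma frac_bound {V : Type} [Fintype V] (G : SimpleGraph V) (w : V → ℕ) (Mb Nb : ℕ)
    (hind : ∀ S : Finset V, (∀ u ∈ S, ∀ v ∈ S, ¬G.Adj u v) → ∑ v ∈ S, w v ≤ Mb)
    (htot : Nb = ∑ v, w v)
    (φ : V → Set ℝ) (hφ : IsFracColoring G φ) :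
    (Nb : ℝ≥0∞) ≤ (Mb : ℝ≥0∞) * volume (⋃ v, φ v) := by
  classical
  obtain ⟨hmeas, hvol, hdisj⟩ := hφ
  have key : ∀ x : ℝ, (∑ v, (φ v).indicator (fun _ => (w v : ℝ≥0∞)) x) ≤
      (⋃ v, φ v).indicator (fun _ => (Mb : ℝ≥0∞)) x := by
    intro x
    by_cases hx : x ∈ ⋃ v, φ v
    · rw [Set.indicator_of_mem hx]
      have hl : (∑ v, (φ v).indicator (fun _ => (w v : ℝ≥0∞)) x)
          = ∑ v ∈ Finset.univ.filter (fun v => x ∈ φ v), (w v : ℝ≥0∞) := by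
        rw [Finset.sum_filter]
        exact Finset.sum_congr rfl (fun v _ => by
          by_cases h : x ∈ φ v <;> simp [Set.indicator_apply, h])
      rw [hl]
      have hcast : (∑ v ∈ Finset.univ.filter (fun v => x ∈ φ v), (w v : ℝ≥0∞))
          = ((∑ v ∈ Finset.univ.filter (fun v => x ∈ φ v), w v : ℕ) : ℝ≥0∞) := by
        push_cast; rfl
      rw [hcast]
      have hle : (∑ v ∈ Finset.univ.filter (fun v => x ∈ φ v), w v) ≤ Mb := by
        apply hind
        intro u hu v hv hadj
        simp only [Finset.mem_filter] at hu hv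
        have := hdisj u v hadj
        have : x ∈ φ u ∩ φ v := ⟨hu.2, hv.2⟩
        rw [hdisj u v hadj] at this
        exact this
      exact_mod_cast hle
    · have : ∀ v, x ∉ φ v := by
        intro v hv
        exact hx (Set.mem_iUnion.mpr ⟨v, hv⟩)
      rw [Set.indicator_of_notMem hx]
      rw [Finset.sum_eq_zero (fun v _ => Set.indicator_of_notMem (this v) _)]
  calc (Nb : ℝ≥0∞) = ∑ v, (w v : ℝ≥0∞) * volume (φ v) := by
        rw [htot]
        push_cast
        exact Finset.sum_congr rfl (fun v _ => by rw [hvol v, mul_one])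
    _ = ∑ v, ∫⁻ x, (φ v).indicator (fun _ => (w v : ℝ≥0∞)) x := by
        exact Finset.sum_congr rfl (fun v _ => by
          rw [MeasureTheory.lintegral_indicator_const (hmeas v)])
    _ = ∫⁻ x, ∑ v, (φ v).indicator (fun _ => (w v : ℝ≥0∞)) x := by
        rw [MeasureTheory.lintegral_finset_sum]
        intro v _
        exact measurable_const.indicator (hmeas v)
    _ ≤ ∫⁻ x, (⋃ v, φ v).indicator (fun _ => (Mb : ℝ≥0∞)) x :=
        MeasureTheory.lintegral_mono key
    _ = (Mb : ℝ≥0∞) * volume (⋃ v, φ v) :=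
        MeasureTheory.lintegral_indicator_const (MeasurableSet.iUnion (fun v => hmeas v)) _

lemma frac_chrom_ge {V : Type} [Fintype V] (G : SimpleGraph V) (w : V → ℕ) (Mb Nb : ℕ)
    (hM : Mb ≠ 0)
    (hind : ∀ S : Finset V, (∀ u ∈ S, ∀ v ∈ S, ¬G.Adj u v) → ∑ v ∈ S, w v ≤ Mb)
    (htot : Nb = ∑ v, w v) (Bv : ℝ) (hB : Bv * Mb ≤ Nb) :
    ENNReal.ofReal Bv ≤ fracChromNum G := by
  apply le_iInf
  intro φ
  apply le_iInf
  intro hφ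
  have h1 := frac_bound G w Mb Nb hind htot φ hφ
  rcases le_or_gt Bv 0 with hneg | hpos
  · rw [ENNReal.ofReal_of_nonpos hneg]
    exact zero_le
  · have h2 : ENNReal.ofReal Bv * (Mb : ℝ≥0∞) ≤ (Nb : ℝ≥0∞) := by
      rw [← ENNReal.ofReal_natCast Mb, ← ENNReal.ofReal_mul (le_of_lt hpos),
        ← ENNReal.ofReal_natCast Nb]
      exact ENNReal.ofReal_le_ofReal hB
    have h3 : (Mb : ℝ≥0∞) * ENNReal.ofReal Bv ≤ (Mb : ℝ≥0∞) * volume (⋃ v, φ v) := by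
      rw [mul_comm (Mb : ℝ≥0∞) _]
      exact le_trans h2 h1
    exact (ENNReal.mul_le_mul_iff_right (by exact_mod_cast hM) (ENNReal.natCast_ne_top Mb)).mp h3

/-! ### Clique number of the gadget -/

section GVhelpers
variable {k ω : ℕ}
lemma GV.hub_ne_core (i : Fin ω) :
    (Sum.inl (Sum.inr ()) : GV (k+1) ω) ≠ Sum.inl (Sum.inl i) :=
  fun h => nomatch h
lemma GV.core_ne_hub (i : Fin ω) :
    (Sum.inl (Sum.inl i) : GV (k+1) ω) ≠ Sum.inl (Sum.inr ()) :=
  fun h => nomatch h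
lemma GV.core_ne_child (i : Fin ω) (p : Fin ω × GV k (ω-1)) :
    (Sum.inl (Sum.inl i) : GV (k+1) ω) ≠ Sum.inr p :=
  fun h => nomatch h
lemma GV.hub_ne_child (p : Fin ω × GV k (ω-1)) :
    (Sum.inl (Sum.inr ()) : GV (k+1) ω) ≠ Sum.inr p :=
  fun h => nomatch h
lemma GV.core_inj {i j : Fin ω} (h : (Sum.inl (Sum.inl i) : GV (k+1) ω) = Sum.inl (Sum.inl j)) :
    i = j := Sum.inl.inj (Sum.inl.inj h)
lemma GV.child_inj {p q : Fin ω × GV k (ω-1)}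
    (h : (Sum.inr p : GV (k+1) ω) = Sum.inr q) : p = q := Sum.inr.inj h
end GVhelpers

lemma cliquefree_of_card_le {V : Type} [DecidableEq V] {G : SimpleGraph V} {m : ℕ}
    (h : ∀ S : Finset V, G.IsClique ↑S → S.card ≤ m) : G.CliqueFree (m+1) := by
  intro S hS
  have := h S hS.1
  rw [hS.2] at this
  omega

lemma clique_card_le_of_cliquefree {V : Type} [DecidableEq V] {G : SimpleGraph V} {m : ℕ}
    (h : G.CliqueFree (m+1)) (S : Finset V) (hS : G.IsClique ↑S) : S.card ≤ m := by
  by_contra hc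
  push_neg at hc
  obtain ⟨T, hTS, hT⟩ := Finset.exists_subset_card_eq (hc : m+1 ≤ S.card)
  exact h T ⟨hS.subset (by exact_mod_cast hTS), hT⟩

lemma gad_cliquefree : ∀ k ω, k ≤ ω → (gad k ω).CliqueFree (ω+1)
  | 0, ω, _ => by
    apply cliquefree_of_card_le
    intro S _
    calc S.card ≤ Fintype.card (GV 0 ω) := Finset.card_le_univ S
      _ = ω := Fintype.card_fin ω
  | (k+1), ω, h => by
    classical
    have hk : k ≤ ω - 1 := by omega
    have hω : 1 ≤ ω := by omega
    have IH := gad_cliquefree k (ω-1) hk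
    apply cliquefree_of_card_le
    intro S hS
    by_cases hch : ∃ p : Fin ω × GV k (ω-1), (Sum.inr p : GV (k+1) ω) ∈ S
    · obtain ⟨⟨c, v₀⟩, hv₀⟩ := hch
      -- all children of S are in block c, all cores in S equal core c
      have hblocks : ∀ p : Fin ω × GV k (ω-1), (Sum.inr p : GV (k+1) ω) ∈ S → p.1 = c := by
        intro p hp
        by_cases hpv : (Sum.inr p : GV (k+1) ω) = Sum.inr (c, v₀)
        · rw [Sum.inr.injEq] at hpv
          rw [hpv]
        · exact (hS hp hv₀ hpv).1
      have hcores : ∀ i : Fin ω, (Sum.inl (Sum.inl i) : GV (k+1) ω) ∈ S → i = c := by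
        intro i hi
        exact (hS hi hv₀ (GV.core_ne_child i (c, v₀)))
      -- the child part is a clique in the child gadget
      set S' : Finset (GV k (ω-1)) :=
        Finset.univ.filter (fun x => (Sum.inr (c, x) : GV (k+1) ω) ∈ S) with hS'
      have hS'cl : (gad k (ω-1)).IsClique ↑S' := by
        intro u hu v hv huv
        simp only [hS', Finset.coe_filter, Set.mem_setOf_eq] at hu hv
        have := hS hu.2 hv.2 (fun hh => huv (congrArg Prod.snd (GV.child_inj hh)))
        exact this.2
      have hS'card : S'.card ≤ ω - 1 :=
        clique_card_le_of_cliquefree IH S' hS'cl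
      by_cases hhub : (Sum.inl (Sum.inr ()) : GV (k+1) ω) ∈ S
      · by_cases hcore : (Sum.inl (Sum.inl c) : GV (k+1) ω) ∈ S
        · exact absurd (hS hhub hcore (GV.hub_ne_core c)) (gad_adj_hub_core k ω c ())
        · -- S ⊆ {hub} ∪ children
          have hsub : S ⊆ insert (Sum.inl (Sum.inr ()) : GV (k+1) ω)
              (S'.image (fun x => (Sum.inr (c, x) : GV (k+1) ω))) := by
            intro x hx
            rcases x with (i | u) | p
            · have hic := hcores i hx
              rw [hic] at hx
              exact absurd hx hcore
            · simp
            · simp only [Finset.mem_insert, Finset.mem_image]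
              refine Or.inr ⟨p.2, ?_, ?_⟩
              · simp only [hS', Finset.mem_filter, Finset.mem_univ, true_and]
                have := hblocks p hx
                rwa [← this, Prod.mk.eta]
              · rw [← hblocks p hx, Prod.mk.eta]
          calc S.card ≤ _ := Finset.card_le_card hsub
            _ ≤ 1 + S'.card := by
                apply le_trans (Finset.card_insert_le _ _)
                have := Finset.card_image_le (f := fun x => (Sum.inr (c, x) : GV (k+1) ω)) (s := S')
                omega
            _ ≤ ω := by omega
      · have hsub : S ⊆ insert (Sum.inl (Sum.inl c) : GV (k+1) ω)
            (S'.image (fun x => (Sum.inr (c, x) : GV (k+1) ω))) := by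
          intro x hx
          rcases x with (i | u) | p
          · have hic := hcores i hx
            rw [hic] at hx ⊢
            simp
          · exact absurd hx hhub
          · simp only [Finset.mem_insert, Finset.mem_image]
            refine Or.inr ⟨p.2, ?_, ?_⟩
            · simp only [hS', Finset.mem_filter, Finset.mem_univ, true_and]
              have := hblocks p hx
              rwa [← this, Prod.mk.eta]
            · rw [← hblocks p hx, Prod.mk.eta]
        calc S.card ≤ _ := Finset.card_le_card hsub
          _ ≤ 1 + S'.card := by
              apply le_trans (Finset.card_insert_le _ _)
              have := Finset.card_image_le (f := fun x => (Sum.inr (c, x) : GV (k+1) ω)) (s := S')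
              omega
          _ ≤ ω := by omega
    · -- no children: S ⊆ cores ∪ {hub}, and hub excludes cores
      push_neg at hch
      by_cases hhub : (Sum.inl (Sum.inr ()) : GV (k+1) ω) ∈ S
      · have : S ⊆ {(Sum.inl (Sum.inr ()) : GV (k+1) ω)} := by
          intro x hx
          rcases x with (i | u) | p
          · exact absurd (hS hx hhub (GV.core_ne_hub i)) (gad_adj_core_hub k ω i ())
          · simp
          · exact absurd hx (hch p)
        calc S.card ≤ 1 := by simpa using Finset.card_le_card this
          _ ≤ ω := hω
      · have : S ⊆ (Finset.univ : Finset (Fin ω)).image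
            (fun i => (Sum.inl (Sum.inl i) : GV (k+1) ω)) := by
          intro x hx
          rcases x with (i | u) | p
          · simp
          · exact absurd hx hhub
          · exact absurd hx (hch p)
        calc S.card ≤ _ := Finset.card_le_card this
          _ ≤ ω := by
            apply le_trans (Finset.card_image_le)
            simp

lemma gad_hasclique (k ω : ℕ) : ∃ S : Finset (GV (k+1) ω), (gad (k+1) ω).IsNClique ω S := by
  classical
  refine ⟨(Finset.univ : Finset (Fin ω)).image (fun i => (Sum.inl (Sum.inl i) : GV (k+1) ω)),
    ?_, ?_⟩
  · intro u hu v hv huv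
    simp only [Finset.coe_image, Set.mem_image] at hu hv
    obtain ⟨i, _, rfl⟩ := hu
    obtain ⟨j, _, rfl⟩ := hv
    exact fun h => huv (by rw [h])
  · rw [Finset.card_image_of_injective _ (fun a b hab => GV.core_inj hab)]
    simp

/-! ### Layout helpers -/

def pick (c m : ℕ) : Finset ℕ := if m ≤ c then Finset.range m else (Finset.range (m+1)).erase c

lemma pick_card (c m : ℕ) : (pick c m).card = m := by
  unfold pick
  split
  · exact Finset.card_range m
  · rw [Finset.card_erase_of_mem (by simp; omega), Finset.card_range]
    omega

lemma pick_lt {c m x : ℕ} (hx : x ∈ pick c m) : x < m + 1 := by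
  unfold pick at hx
  split at hx
  · simp at hx; omega
  · simp at hx; omega

lemma pick_ne {c m x : ℕ} (hx : x ∈ pick c m) : x ≠ c := by
  unfold pick at hx
  split at hx
  · simp at hx; omega
  · exact (Finset.mem_erase.mp hx).1

lemma pick_mono {c m m' : ℕ} (h : m ≤ m') : pick c m ⊆ pick c m' := by
  intro x hx
  have h1 := pick_lt hx
  have h2 := pick_ne hx
  unfold pick at hx ⊢
  split at hx <;> split <;> simp_all <;> omega

lemma blk_inj {n a b x y : ℕ} (ha : x < n) (hb : y < n) (h : a*n+x = b*n+y) :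
    a = b ∧ x = y := by
  have hab : a = b := by
    rcases lt_trichotomy a b with hlt | heq | hgt
    · have : a*n+x < b*n+y := by
        calc a*n+x < a*n+n := by omega
          _ = (a+1)*n := by ring
          _ ≤ b*n := Nat.mul_le_mul_right n (by omega)
          _ ≤ b*n+y := Nat.le_add_right _ _
      omega
    · exact heq
    · have : b*n+y < a*n+x := by
        calc b*n+y < b*n+n := by omega
          _ = (b+1)*n := by ring
          _ ≤ a*n := Nat.mul_le_mul_right n (by omega)
          _ ≤ a*n+x := Nat.le_add_right _ _
      omega
  subst hab
  exact ⟨rfl, Nat.add_left_cancel h⟩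

lemma decomp_div {n c x : ℕ} (hx : x < n) : (c*n+x)/n = c := by
  rw [mul_comm, Nat.mul_add_div (by omega), Nat.div_eq_of_lt hx, Nat.add_zero]

lemma decomp_mod {n c x : ℕ} (hx : x < n) : (c*n+x)%n = x := by
  rw [mul_comm, Nat.mul_add_mod, Nat.mod_eq_of_lt hx]

set_option maxHeartbeats 1000000 in
theorem gad_layout : ∀ k ω, k ≤ ω → Nonempty (Layout (ω + k - 1) (gad k ω))
  | 0, ω, _ => by
    classical
    refine ⟨⟨ω, fun v => Fin.val (v : Fin ω),
      fun i => if i < ω - 1 then ∅ else Finset.range (ω-1),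
      by omega, fun v => (v : Fin ω).isLt, ?_, ?_, ?_, ?_, ?_, ?_⟩⟩
    · intro a b hab
      exact Fin.val_injective hab
    · intro i hi
      rw [if_pos (by omega)]
    · intro i h1 h2
      rw [if_neg (by omega), Finset.card_range]
      omega
    · intro i h1 h2 j hj
      rw [if_neg (by omega)] at hj
      rw [Finset.mem_range] at hj
      omega
    · intro i h1 h2 j hj j' hj' hlt'
      rw [if_neg (by omega)] at hj'
      rw [Finset.mem_range] at hj'
      left; omega
    · intro u v _ huv
      by_cases hv : Fin.val (v : Fin ω) < ω - 1
      · left; constructor <;> omega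
      · right
        rw [if_neg (by omega), Finset.mem_range]
        have := (v : Fin ω).isLt
        omega
  | (k+1), ω, h => by
    classical
    by_cases hω2 : 2 ≤ ω
    case neg =>
      have hω1 : ω = 1 := by omega
      have hk0 : k = 0 := by omega
      subst hω1 hk0
      refine ⟨⟨2, fun v => match v with
          | .inl (.inl _) => 0
          | .inl (.inr _) => 1
          | .inr p => (p.2 : Fin 0).elim0,
        fun i => if i = 1 then {0} else ∅,
        by omega, ?_, ?_, ?_, ?_, ?_, ?_, ?_⟩⟩
      · intro v
        rcases v with (i | u) | p
        · norm_num
        · norm_num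
        · exact (p.2 : Fin 0).elim0
      · intro a b hab
        rcases a with (i | u) | p <;> rcases b with (j | u') | q
        · have : i = j := by
            have h1 := i.isLt; have h2 := j.isLt
            omega
          rw [this]
        · simp at hab
        · exact (q.2 : Fin 0).elim0
        · simp at hab
        · rfl
        · exact (q.2 : Fin 0).elim0
        · exact (p.2 : Fin 0).elim0
        · exact (p.2 : Fin 0).elim0
        · exact (p.2 : Fin 0).elim0
      · intro i hi
        rw [if_neg (by omega)]
      · intro i h1 h2
        rw [if_pos (by omega)]
        rfl
      · intro i h1 h2 j hj
        rw [if_pos (by omega)] at hj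
        simp at hj
        omega
      · intro i h1 h2 j hj j' hj' hlt'
        rw [if_pos (by omega)] at hj hj'
        simp at hj hj'
        omega
      · intro u v hadj hlt'
        rcases u with (i | uu) | p
        · rcases v with (j | u') | q
          · have hi := i.isLt; have hj := j.isLt
            have hij : i = j := by
              apply Fin.ext
              omega
            rw [hij] at hadj
            exact ((gad (0+1) 1).loopless.irrefl _ hadj).elim
          · exact absurd hadj (gad_adj_core_hub 0 1 i u')
          · exact (q.2 : Fin 0).elim0
        · rcases v with (j | u') | q
          · exact absurd hadj (gad_adj_hub_core 0 1 j uu)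
          · exact absurd hadj (gad_adj_hub_hub 0 1 uu u')
          · exact (q.2 : Fin 0).elim0
        · exact (p.2 : Fin 0).elim0
    case pos =>
      have hk : k ≤ ω - 1 := by omega
      obtain ⟨L⟩ := gad_layout k (ω-1) hk
      have hgoal : ω + (k+1) - 1 = ω + k := by omega
      rw [hgoal]
      set t := ω + k with htdef
      set t' := (ω - 1) + k - 1 with ht'def
      set n' := L.n with hn'def
      have ht' : t' + 2 = t := by omega
      have hωt : ω ≤ t := by omega
      have ht2 : 2 ≤ t := by omega
      set shift : ℕ → ℕ → ℕ := fun c x => t + 1 + (c * n' + x) with hshift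
      have shift_inj : ∀ c : ℕ, Function.Injective (shift c) := by
        intro c x y hxy
        simp only [hshift] at hxy
        exact Nat.add_left_cancel (Nat.add_left_cancel hxy)
      have shift_gt : ∀ c x, t < shift c x := by
        intro c x
        simp only [hshift]
        omega
      have shift_lt_n : ∀ c x, c < ω → x < n' → shift c x < t + 1 + ω * n' := by
        intro c x hc hx
        have hA : c * n' + n' ≤ ω * n' := by
          calc c*n'+n' = (c+1)*n' := by ring
            _ ≤ ω*n' := Nat.mul_le_mul_right n' (by omega)
        simp only [hshift]
        omega
      have shift_mono : ∀ c x y, x < y → shift c x < shift c y := by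
        intro c x y hxy
        simp only [hshift]
        omega
      set fP : GV (k+1) ω → ℕ := fun v => match v with
        | .inl (.inl i) => (i : ℕ)
        | .inl (.inr _) => t
        | .inr p => shift (p.1 : ℕ) (L.f p.2) with hfP
      set BP : ℕ → Finset ℕ := fun i =>
        if i < t then ∅ else if i = t then Finset.range t else
          insert ((i - (t+1)) / n') (insert t
            (if (i - (t+1)) % n' < t' then
              ((Finset.range ((i - (t+1)) % n')).image (shift ((i - (t+1)) / n')))
                ∪ pick ((i - (t+1)) / n') (t - 2 - ((i - (t+1)) % n'))
             else (L.B ((i - (t+1)) % n')).image (shift ((i - (t+1)) / n')))) with hBP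
      have hBblock : ∀ c u : ℕ, u < n' →
          BP (shift c u) = insert c (insert t
            (if u < t' then ((Finset.range u).image (shift c)) ∪ pick c (t-2-u)
             else (L.B u).image (shift c))) := by
        intro c u hu
        have h1 : ¬ shift c u < t := by
          have := shift_gt c u
          omega
        have h2 : ¬ shift c u = t := by
          have := shift_gt c u
          omega
        have hm : shift c u - (t+1) = c * n' + u := by
          simp only [hshift]
          omega
        simp only [hBP, if_neg h1, if_neg h2, hm, decomp_div hu, decomp_mod hu]
      -- facts about membership in the inner part
      have hinner_lt : ∀ c u x, u < n' → x ∈ (if u < t' then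
            ((Finset.range u).image (shift c)) ∪ pick c (t-2-u)
            else (L.B u).image (shift c)) → x < shift c u ∧ (x < t ∨ ∃ y < u, x = shift c y) := by
        intro c u x hu hx
        split at hx
        · rcases Finset.mem_union.mp hx with hx | hx
          · obtain ⟨y, hy, rfl⟩ := Finset.mem_image.mp hx
            rw [Finset.mem_range] at hy
            exact ⟨shift_mono c _ _ hy, Or.inr ⟨y, hy, rfl⟩⟩
          · have h1 := pick_lt hx
            constructor
            · have := shift_gt c u
              omega
            · left; omega
        · obtain ⟨y, hy, rfl⟩ := Finset.mem_image.mp hx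
          have hyu : y < u := L.hlt u (by omega) (by omega) y hy
          exact ⟨shift_mono c _ _ hyu, Or.inr ⟨y, hyu, rfl⟩⟩
      have hBt : BP t = Finset.range t := by
        simp [hBP]
      have hdecomp : ∀ i, t < i → i < t + 1 + ω * n' →
          ∃ c u, c < ω ∧ u < n' ∧ i = shift c u := by
        intro i hit h2
        have hn'pos : 0 < n' := by
          rcases Nat.eq_zero_or_pos n' with h0 | h0
          · rw [h0, Nat.mul_zero] at h2
            omega
          · exact h0
        refine ⟨(i - (t+1)) / n', (i - (t+1)) % n', ?_, Nat.mod_lt _ hn'pos, ?_⟩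
        · apply Nat.div_lt_of_lt_mul
          rw [Nat.mul_comm n' ω]
          omega
        · have hcu : ((i - (t+1)) / n') * n' + (i - (t+1)) % n' = i - (t+1) := by
            rw [mul_comm]
            exact Nat.div_add_mod _ n'
          simp only [hshift]
          omega
      refine ⟨⟨t + 1 + ω * n', fP, BP, by omega, ?_, ?_, ?_, ?_, ?_, ?_, ?_⟩⟩
      · -- hf
        intro v
        rcases v with (i | u) | ⟨c, v⟩
        · simp only [hfP]
          have := i.isLt
          omega
        · simp only [hfP]
          omega
        · simp only [hfP]
          exact shift_lt_n _ _ c.isLt (L.hf v)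
      · -- hinj
        intro a b hab
        rcases a with (i | u) | ⟨c, v⟩ <;> rcases b with (j | u') | ⟨c', v'⟩ <;>
          simp only [hfP] at hab
        · rw [show i = j from Fin.ext hab]
        · exact absurd hab (by have := i.isLt; omega)
        · exact absurd hab (by have := i.isLt; have := shift_gt (c' : ℕ) (L.f v'); omega)
        · exact absurd hab (by have := j.isLt; omega)
        · cases u; cases u'; rfl
        · exact absurd hab (by have := shift_gt (c' : ℕ) (L.f v'); omega)
        · exact absurd hab (by have := j.isLt; have := shift_gt (c : ℕ) (L.f v); omega)
        · exact absurd hab (by have := shift_gt (c : ℕ) (L.f v); omega)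
        · simp only [hshift] at hab
          have h0 : (c : ℕ) * n' + L.f v = (c' : ℕ) * n' + L.f v' := by omega
          obtain ⟨hc, hv⟩ := blk_inj (L.hf v) (L.hf v') h0
          rw [show c = c' from Fin.ext hc, show v = v' from L.hinj hv]
      · -- hlow
        intro i hi
        simp only [hBP, if_pos hi]
      · -- hcard
        intro i h1 h2
        rcases Nat.lt_or_ge t i with hit | hit
        · have hn'pos : 0 < n' := by
            rcases Nat.eq_zero_or_pos n' with h0 | h0
            · rw [h0, Nat.mul_zero] at h2
              omega
            · exact h0
          set m := i - (t+1) with hmdef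
          set c := m / n' with hcdef
          set u := m % n' with hudef
          have hu : u < n' := Nat.mod_lt _ hn'pos
          have hcu : c * n' + u = m := by
            rw [hcdef, hudef, mul_comm]
            exact Nat.div_add_mod m n'
          have hmlt : m < ω * n' := by omega
          have hc : c < ω := Nat.div_lt_of_lt_mul (by rw [Nat.mul_comm n' ω]; exact hmlt)
          have hieq : i = shift c u := by
            simp only [hshift]
            omega
          rw [hieq, hBblock c u hu]
          have hpick_lt_t : ∀ x ∈ pick c (t-2-u), x < t := by
            intro x hx
            have := pick_lt hx
            omega
          by_cases huT : u < t'
          · rw [if_pos huT]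
            have hd1 : Disjoint ((Finset.range u).image (shift c)) (pick c (t-2-u)) := by
              rw [Finset.disjoint_left]
              intro x hx hx'
              obtain ⟨y, _, rfl⟩ := Finset.mem_image.mp hx
              have := shift_gt c y
              have := hpick_lt_t _ hx'
              omega
            have ht_notin : t ∉ (Finset.range u).image (shift c) ∪ pick c (t-2-u) := by
              rw [Finset.mem_union]
              rintro (hx | hx)
              · obtain ⟨y, _, hy⟩ := Finset.mem_image.mp hx
                have := shift_gt c y
                omega
              · have := hpick_lt_t _ hx
                omega
            have hc_notin : c ∉ insert t ((Finset.range u).image (shift c) ∪ pick c (t-2-u)) := by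
              rw [Finset.mem_insert, Finset.mem_union]
              rintro (hx | hx | hx)
              · omega
              · obtain ⟨y, _, hy⟩ := Finset.mem_image.mp hx
                have := shift_gt c y
                omega
              · exact (pick_ne hx) rfl
            rw [Finset.card_insert_of_notMem hc_notin, Finset.card_insert_of_notMem ht_notin,
              Finset.card_union_of_disjoint hd1,
              Finset.card_image_of_injective _ (shift_inj c), Finset.card_range, pick_card]
            omega
          · rw [if_neg huT]
            have ht_notin : t ∉ (L.B u).image (shift c) := by
              intro hx
              obtain ⟨y, _, hy⟩ := Finset.mem_image.mp hx
              have := shift_gt c y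
              omega
            have hc_notin : c ∉ insert t ((L.B u).image (shift c)) := by
              rw [Finset.mem_insert]
              rintro (hx | hx)
              · omega
              · obtain ⟨y, _, hy⟩ := Finset.mem_image.mp hx
                have := shift_gt c y
                omega
            rw [Finset.card_insert_of_notMem hc_notin, Finset.card_insert_of_notMem ht_notin,
              Finset.card_image_of_injective _ (shift_inj c),
              L.hcard u (by omega) (by omega)]
            omega
        · have hieq : i = t := by omega
          rw [hieq, hBt, Finset.card_range]
      · -- hlt
        intro i h1 h2 j hj
        rcases Nat.lt_or_ge t i with hit | hit
        · obtain ⟨c, u, hc, hu, hieq⟩ := hdecomp i hit h2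
          rw [hieq, hBblock c u hu] at hj
          rw [hieq]
          rcases Finset.mem_insert.mp hj with hjc | hj
          · have := shift_gt c u
            omega
          rcases Finset.mem_insert.mp hj with hjt | hj
          · have := shift_gt c u
            omega
          · exact (hinner_lt c u j hu hj).1
        · have hieq : i = t := by omega
          rw [hieq, hBt, Finset.mem_range] at hj
          omega
      · -- hcl
        intro i h1 h2 j hj j' hj' hjj'
        rcases Nat.lt_or_ge t i with hit | hit
        · obtain ⟨c, u, hc, hu, hieq⟩ := hdecomp i hit h2
          rw [hieq, hBblock c u hu] at hj hj'
          rcases Finset.mem_insert.mp hj' with hj'c | hj'rest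
          · left
            omega
          · rcases Finset.mem_insert.mp hj'rest with hj't | hj'in
            · right
              rw [hj't, hBt, Finset.mem_range]
              omega
            · by_cases huT : u < t'
              · rw [if_pos huT] at hj hj'in
                rcases Finset.mem_union.mp hj'in with hj'im | hj'pk
                · obtain ⟨y, hy, hj'eq⟩ := Finset.mem_image.mp hj'im
                  rw [Finset.mem_range] at hy
                  have hyn : y < n' := by omega
                  right
                  rw [← hj'eq, hBblock c y hyn, if_pos (by omega : y < t')]
                  rcases Finset.mem_insert.mp hj with hjc | hjrest
                  · rw [hjc]
                    exact Finset.mem_insert_self _ _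
                  rcases Finset.mem_insert.mp hjrest with hjt | hjin
                  · rw [hjt]
                    exact Finset.mem_insert_of_mem (Finset.mem_insert_self _ _)
                  · rcases Finset.mem_union.mp hjin with hjim | hjpk
                    · obtain ⟨x, hx, hjeq⟩ := Finset.mem_image.mp hjim
                      rw [Finset.mem_range] at hx
                      have hxy : x < y := by
                        rw [← hjeq, ← hj'eq] at hjj'
                        simp only [hshift] at hjj'
                        omega
                      apply Finset.mem_insert_of_mem
                      apply Finset.mem_insert_of_mem
                      apply Finset.mem_union_left
                      exact Finset.mem_image.mpr ⟨x, Finset.mem_range.mpr hxy, hjeq⟩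
                    · apply Finset.mem_insert_of_mem
                      apply Finset.mem_insert_of_mem
                      apply Finset.mem_union_right
                      exact pick_mono (by omega) hjpk
                · left
                  have := pick_lt hj'pk
                  omega
              · rw [if_neg huT] at hj hj'in
                obtain ⟨y, hy, hj'eq⟩ := Finset.mem_image.mp hj'in
                have hyu : y < u := L.hlt u (by omega) (by omega) y hy
                have hyn : y < n' := by omega
                right
                rw [← hj'eq, hBblock c y hyn]
                rcases Finset.mem_insert.mp hj with hjc | hjrest
                · rw [hjc]
                  exact Finset.mem_insert_self _ _
                rcases Finset.mem_insert.mp hjrest with hjt | hjin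
                · rw [hjt]
                  exact Finset.mem_insert_of_mem (Finset.mem_insert_self _ _)
                · obtain ⟨x, hx, hjeq⟩ := Finset.mem_image.mp hjin
                  have hxy : x < y := by
                    rw [← hjeq, ← hj'eq] at hjj'
                    simp only [hshift] at hjj'
                    omega
                  rcases L.hcl u (by omega) (by omega) x hx y hy hxy with hyT | hxBy
                  · rw [if_pos hyT]
                    apply Finset.mem_insert_of_mem
                    apply Finset.mem_insert_of_mem
                    apply Finset.mem_union_left
                    exact Finset.mem_image.mpr ⟨x, Finset.mem_range.mpr hxy, hjeq⟩
                  · have hyT : ¬ y < t' := by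
                      intro hcon
                      rw [L.hlow y hcon] at hxBy
                      exact absurd hxBy (Finset.notMem_empty x)
                    rw [if_neg hyT]
                    apply Finset.mem_insert_of_mem
                    apply Finset.mem_insert_of_mem
                    exact Finset.mem_image.mpr ⟨x, hxBy, hjeq⟩
        · have hieq : i = t := by omega
          rw [hieq, hBt, Finset.mem_range] at hj'
          left
          exact hj'
      · -- hedge
        intro a b hadj hfab
        rcases a with (i | u) | ⟨c, v⟩ <;> rcases b with (j | u') | ⟨c', v'⟩
        · left
          constructor
          · simp only [hfP]
            have := i.isLt
            omega
          · simp only [hfP]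
            have := j.isLt
            omega
        · exact absurd hadj (gad_adj_core_hub k ω i u')
        · right
          simp only [hfP]
          have hic : i = c' := (gad_adj_core_child k ω i (c', v')).mp hadj
          rw [hBblock _ _ (L.hf v'), hic]
          exact Finset.mem_insert_self _ _
        · exact absurd hadj (gad_adj_hub_core k ω j u)
        · exact absurd hadj (gad_adj_hub_hub k ω u u')
        · right
          simp only [hfP]
          rw [hBblock _ _ (L.hf v')]
          exact Finset.mem_insert_of_mem (Finset.mem_insert_self _ _)
        · exfalso
          simp only [hfP] at hfab
          have := j.isLt
          have := shift_gt (c : ℕ) (L.f v)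
          omega
        · exfalso
          simp only [hfP] at hfab
          have := shift_gt (c : ℕ) (L.f v)
          omega
        · have hcc : c = c' := ((gad_adj_child_child k ω (c, v) (c', v')).mp hadj).1
          have hadj2 := ((gad_adj_child_child k ω (c, v) (c', v')).mp hadj).2
          subst hcc
          have hlf : L.f v < L.f v' := by
            simp only [hfP, hshift] at hfab
            omega
          right
          simp only [hfP]
          rw [hBblock _ _ (L.hf v')]
          rcases L.hedge v v' hadj2 hlf with ⟨hv1, hv2⟩ | hvB
          · rw [if_pos hv2]
            apply Finset.mem_insert_of_mem
            apply Finset.mem_insert_of_mem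
            apply Finset.mem_union_left
            exact Finset.mem_image.mpr ⟨L.f v, Finset.mem_range.mpr hlf, rfl⟩
          · have hnT : ¬ L.f v' < t' := by
              intro hcon
              rw [L.hlow _ hcon] at hvB
              exact absurd hvB (Finset.notMem_empty _)
            rw [if_neg hnT]
            apply Finset.mem_insert_of_mem
            apply Finset.mem_insert_of_mem
            exact Finset.mem_image.mpr ⟨L.f v, hvB, rfl⟩

/-! ### The final graph: K_{t,t} ⊔ gadget -/

@[reducible] def UV (t k ω : ℕ) : Type := (Fin t ⊕ Fin t) ⊕ GV k ω

instance (t k ω : ℕ) : Fintype (UV t k ω) :=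
  inferInstanceAs (Fintype ((Fin t ⊕ Fin t) ⊕ GV k ω))
instance (t k ω : ℕ) : DecidableEq (UV t k ω) :=
  inferInstanceAs (DecidableEq ((Fin t ⊕ Fin t) ⊕ GV k ω))

def UG (t k ω : ℕ) : SimpleGraph (UV t k ω) where
  Adj a b := match a, b with
    | .inl (.inl _), .inl (.inr _) => True
    | .inl (.inr _), .inl (.inl _) => True
    | .inr v, .inr w => (gad k ω).Adj v w
    | _, _ => False
  symm := ⟨by
    rintro ((a | a) | v) ((b | b) | w) h <;> simp_all
    exact (gad k ω).adj_symm h⟩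
  loopless := ⟨by
    rintro ((a | a) | v) h
    · exact h
    · exact h
    · exact (gad k ω).loopless.irrefl v h⟩

@[simp] lemma UG_adj_lr (t k ω : ℕ) (a b : Fin t) :
    (UG t k ω).Adj (.inl (.inl a)) (.inl (.inr b)) := trivial
@[simp] lemma UG_adj_rl (t k ω : ℕ) (a b : Fin t) :
    (UG t k ω).Adj (.inl (.inr b)) (.inl (.inl a)) := trivial
@[simp] lemma UG_adj_rr (t k ω : ℕ) (v w : GV k ω) :
    (UG t k ω).Adj (.inr v) (.inr w) ↔ (gad k ω).Adj v w := Iff.rfl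
@[simp] lemma UG_adj_ll (t k ω : ℕ) (a b : Fin t) :
    ¬ (UG t k ω).Adj (.inl (.inl a)) (.inl (.inl b)) := fun h => h
@[simp] lemma UG_adj_rr' (t k ω : ℕ) (a b : Fin t) :
    ¬ (UG t k ω).Adj (.inl (.inr a)) (.inl (.inr b)) := fun h => h
@[simp] lemma UG_adj_cross1 (t k ω : ℕ) (a : Fin t) (v : GV k ω) :
    ¬ (UG t k ω).Adj (.inl (.inl a)) (.inr v) := fun h => h
@[simp] lemma UG_adj_cross2 (t k ω : ℕ) (a : Fin t) (v : GV k ω) :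
    ¬ (UG t k ω).Adj (.inl (.inr a)) (.inr v) := fun h => h
@[simp] lemma UG_adj_cross3 (t k ω : ℕ) (a : Fin t) (v : GV k ω) :
    ¬ (UG t k ω).Adj (.inr v) (.inl (.inl a)) := fun h => h
@[simp] lemma UG_adj_cross4 (t k ω : ℕ) (a : Fin t) (v : GV k ω) :
    ¬ (UG t k ω).Adj (.inr v) (.inl (.inr a)) := fun h => h

theorem UG_layout (t k ω : ℕ) (hkω : k ≤ ω) (htk : t = ω + k - 1) (ht1 : 1 ≤ t) :
    Nonempty (Layout t (UG t k ω)) := by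
  classical
  obtain ⟨L⟩ := gad_layout k ω hkω
  rw [← htk] at L
  set n' := L.n with hn'def
  set shift : ℕ → ℕ := fun x => 2*t + x with hshift
  have shift_inj : Function.Injective shift := by
    intro x y h
    simp only [hshift] at h
    omega
  set fP : UV t k ω → ℕ := fun v => match v with
    | .inl (.inl a) => (a : ℕ)
    | .inl (.inr b) => t + (b : ℕ)
    | .inr v => shift (L.f v) with hfP
  set BP : ℕ → Finset ℕ := fun i =>
    if i < t then ∅ else if i < 2*t then Finset.range t else
      (if i - 2*t < t then ((Finset.range (i - 2*t)).image shift) ∪ Finset.range (t - (i - 2*t))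
       else (L.B (i - 2*t)).image shift) with hBP
  have hBblock : ∀ u : ℕ,
      BP (shift u) = (if u < t then ((Finset.range u).image shift) ∪ Finset.range (t - u)
        else (L.B u).image shift) := by
    intro u
    have h1 : ¬ shift u < t := by simp only [hshift]; omega
    have h2 : ¬ shift u < 2*t := by simp only [hshift]; omega
    have hm : shift u - 2*t = u := by simp only [hshift]; omega
    simp only [hBP, if_neg h1, if_neg h2, hm]
  have hBmid : ∀ i, t ≤ i → i < 2*t → BP i = Finset.range t := by
    intro i hi1 hi2
    simp only [hBP, if_neg (by omega : ¬ i < t), if_pos hi2]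
  refine ⟨⟨2*t + n', fP, BP, by omega, ?_, ?_, ?_, ?_, ?_, ?_, ?_⟩⟩
  · intro v
    rcases v with (a | b) | v
    · simp only [hfP]
      have := a.isLt
      omega
    · simp only [hfP]
      have := b.isLt
      omega
    · simp only [hfP, hshift]
      have := L.hf v
      omega
  · intro a b hab
    rcases a with (a | a) | v <;> rcases b with (b | b) | w <;> simp only [hfP, hshift] at hab
    · rw [show a = b from Fin.ext hab]
    · exact absurd hab (by have := a.isLt; omega)
    · exact absurd hab (by have := a.isLt; omega)
    · exact absurd hab (by have := b.isLt; omega)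
    · rw [show a = b from Fin.ext (by omega)]
    · exact absurd hab (by have := a.isLt; omega)
    · exact absurd hab (by have := b.isLt; omega)
    · exact absurd hab (by have := b.isLt; omega)
    · rw [show v = w from L.hinj (by omega)]
  · intro i hi
    simp only [hBP, if_pos hi]
  · intro i h1 h2
    rcases Nat.lt_or_ge i (2*t) with hmid | hblk
    · rw [hBmid i h1 hmid, Finset.card_range]
    · have hu : i - 2*t < n' := by omega
      have hieq : i = shift (i - 2*t) := by simp only [hshift]; omega
      rw [hieq, hBblock]
      by_cases huT : i - 2*t < t
      · rw [if_pos huT]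
        have hd : Disjoint ((Finset.range (i - 2*t)).image shift) (Finset.range (t - (i - 2*t))) := by
          rw [Finset.disjoint_left]
          intro x hx hx'
          obtain ⟨y, _, rfl⟩ := Finset.mem_image.mp hx
          rw [Finset.mem_range] at hx'
          simp only [hshift] at hx'
          omega
        rw [Finset.card_union_of_disjoint hd, Finset.card_image_of_injective _ shift_inj,
          Finset.card_range, Finset.card_range]
        omega
      · rw [if_neg huT, Finset.card_image_of_injective _ shift_inj,
          L.hcard _ (by omega) hu]
  · intro i h1 h2 j hj
    rcases Nat.lt_or_ge i (2*t) with hmid | hblk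
    · rw [hBmid i h1 hmid, Finset.mem_range] at hj
      omega
    · have hu : i - 2*t < n' := by omega
      have hieq : i = shift (i - 2*t) := by simp only [hshift]; omega
      rw [hieq, hBblock] at hj
      split at hj
      · rcases Finset.mem_union.mp hj with hx | hx
        · obtain ⟨y, hy, rfl⟩ := Finset.mem_image.mp hx
          rw [Finset.mem_range] at hy
          simp only [hshift]
          omega
        · rw [Finset.mem_range] at hx
          omega
      · obtain ⟨y, hy, rfl⟩ := Finset.mem_image.mp hj
        have := L.hlt _ (by omega) hu y hy
        simp only [hshift]
        omega
  · intro i h1 h2 j hj j' hj' hjj'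
    rcases Nat.lt_or_ge i (2*t) with hmid | hblk
    · rw [hBmid i h1 hmid, Finset.mem_range] at hj'
      left
      exact hj'
    · have hu : i - 2*t < n' := by omega
      have hieq : i = shift (i - 2*t) := by simp only [hshift]; omega
      rw [hieq, hBblock] at hj hj'
      by_cases huT : i - 2*t < t
      case pos =>
        rw [if_pos huT] at hj hj'
        rcases Finset.mem_union.mp hj' with hx' | hx'
        · obtain ⟨y, hy, hyeq⟩ := Finset.mem_image.mp hx'
          rw [Finset.mem_range] at hy
          right
          rw [← hyeq, hBblock, if_pos (by omega : y < t)]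
          rcases Finset.mem_union.mp hj with hx | hx
          · obtain ⟨x, hxm, hxeq⟩ := Finset.mem_image.mp hx
            rw [Finset.mem_range] at hxm
            have hxy : x < y := by
              rw [← hxeq, ← hyeq] at hjj'
              simp only [hshift] at hjj'
              omega
            apply Finset.mem_union_left
            exact Finset.mem_image.mpr ⟨x, Finset.mem_range.mpr hxy, hxeq⟩
          · rw [Finset.mem_range] at hx
            apply Finset.mem_union_right
            rw [Finset.mem_range]
            omega
        · rw [Finset.mem_range] at hx'
          left
          omega
      case neg =>
        rw [if_neg huT] at hj hj'
        obtain ⟨y, hy, hyeq⟩ := Finset.mem_image.mp hj'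
        have hyu : y < i - 2*t := L.hlt _ (by omega) hu y hy
        have hyn : y < n' := by omega
        obtain ⟨x, hx, hxeq⟩ := Finset.mem_image.mp hj
        have hxy : x < y := by
          rw [← hxeq, ← hyeq] at hjj'
          simp only [hshift] at hjj'
          omega
        right
        rw [← hyeq, hBblock]
        rcases L.hcl _ (by omega) hu x hx y hy hxy with hyT | hxBy
        · rw [if_pos hyT]
          apply Finset.mem_union_left
          exact Finset.mem_image.mpr ⟨x, Finset.mem_range.mpr hxy, hxeq⟩
        · have hyT : ¬ y < t := by
            intro hcon
            rw [L.hlow y hcon] at hxBy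
            exact absurd hxBy (Finset.notMem_empty x)
          rw [if_neg hyT]
          exact Finset.mem_image.mpr ⟨x, hxBy, hxeq⟩
  · intro a b hadj hfab
    rcases a with (a | a) | v <;> rcases b with (b | b) | w
    · exact absurd hadj (UG_adj_ll t k ω a b)
    · right
      simp only [hfP]
      rw [hBmid (t + (b:ℕ)) (by omega) (by have := b.isLt; omega), Finset.mem_range]
      exact a.isLt
    · exact absurd hadj (UG_adj_cross1 t k ω a w)
    · exfalso
      simp only [hfP] at hfab
      have := b.isLt
      omega
    · exact absurd hadj (UG_adj_rr' t k ω a b)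
    · exact absurd hadj (UG_adj_cross2 t k ω a w)
    · exact absurd hadj (UG_adj_cross3 t k ω b v)
    · exact absurd hadj (UG_adj_cross4 t k ω b v)
    · have hadj' : (gad k ω).Adj v w := hadj
      have hlf : L.f v < L.f w := by
        simp only [hfP, hshift] at hfab
        omega
      right
      simp only [hfP]
      rw [hBblock]
      rcases L.hedge v w hadj' hlf with ⟨hv1, hv2⟩ | hvB
      · rw [if_pos hv2]
        apply Finset.mem_union_left
        exact Finset.mem_image.mpr ⟨L.f v, Finset.mem_range.mpr hlf, rfl⟩
      · have hnT : ¬ L.f w < t := by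
          intro hcon
          rw [L.hlow _ hcon] at hvB
          exact absurd hvB (Finset.notMem_empty _)
        rw [if_neg hnT]
        exact Finset.mem_image.mpr ⟨L.f v, hvB, rfl⟩

/-! ### Treewidth lower bound via the K_{t,t} component -/

theorem UG_lower (t k ω : ℕ) (ht1 : 1 ≤ t) :
    ∀ s : ℕ, TreewidthAtMost (UG t k ω) s → t ≤ s := by
  classical
  intro s hs
  obtain ⟨n, H, f, ⟨hsn, hfirst, hback⟩, hinj, hhom⟩ := hs
  -- the 2t bipartite vertices
  set g : Fin t ⊕ Fin t → Fin n := fun x => f (.inl x) with hg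
  have hne : (Finset.univ : Finset (Fin t ⊕ Fin t)).Nonempty := by
    refine ⟨Sum.inl ⟨0, by omega⟩, Finset.mem_univ _⟩
  obtain ⟨x₀, _, hmax⟩ := Finset.exists_max_image Finset.univ (fun x => ((g x : Fin n) : ℕ)) hne
  -- the t neighbours of x₀ on the other side
  have key : ∀ other : Fin t → Fin t ⊕ Fin t,
      Function.Injective other →
      (∀ y, (UG t k ω).Adj (.inl x₀) (.inl (other y))) → t ≤ s := by
    intro other hoinj hoadj
    have hadjH : ∀ y, H.Adj (g x₀) (g (other y)) := fun y => hhom _ _ (hoadj y)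
    have hlt : ∀ y : Fin t, ((g (other y) : Fin n) : ℕ) < ((g x₀ : Fin n) : ℕ) := by
      intro y
      have hle := hmax (other y) (Finset.mem_univ _)
      have hne2 : g (other y) ≠ g x₀ := by
        intro hcon
        have hcon' : f (.inl (other y)) = f (.inl x₀) := hcon
        have := hinj hcon'
        rw [Sum.inl.injEq] at this
        exact (UG t k ω).loopless.irrefl _ (this ▸ hoadj y)
      have : ((g (other y) : Fin n) : ℕ) ≠ ((g x₀ : Fin n) : ℕ) := by
        intro hcon
        exact hne2 (Fin.ext hcon)
      omega
    rcases Nat.lt_or_ge ((g x₀ : Fin n) : ℕ) s with hsm | hbig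
    · -- all neighbours have value < g x₀ < s
      have hi : Function.Injective (fun y : Fin t => (⟨((g (other y) : Fin n) : ℕ), by
          have := hlt y; omega⟩ : Fin s)) := by
        intro y y' hyy'
        have : ((g (other y) : Fin n) : ℕ) = ((g (other y') : Fin n) : ℕ) := by
          simpa using congrArg Fin.val hyy'
        have : g (other y) = g (other y') := Fin.ext this
        have := hinj (by simpa [hg] using this)
        rw [Sum.inl.injEq] at this
        exact hoinj this
      calc t = Fintype.card (Fin t) := (Fintype.card_fin t).symm
        _ ≤ Fintype.card (Fin s) := Fintype.card_le_of_injective _ hi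
        _ = s := Fintype.card_fin s
    · -- backward neighbourhood of g x₀ has exactly s elements
      obtain ⟨_, hcard⟩ := hback (g x₀) hbig
      set S₀ : Set (Fin n) := {j : Fin n | j < g x₀ ∧ H.Adj (g x₀) j} with hS₀
      have hsub : ↑((Finset.univ : Finset (Fin t)).image (fun y => g (other y))) ⊆ S₀ := by
        intro j hj
        simp only [Finset.coe_image, Set.mem_image] at hj
        obtain ⟨y, _, rfl⟩ := hj
        exact ⟨by exact_mod_cast hlt y, hadjH y⟩
      have hcardimg : ((Finset.univ : Finset (Fin t)).image (fun y => g (other y))).card = t := by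
        rw [Finset.card_image_of_injective _ (by
          intro y y' hyy'
          have := hinj (by simpa [hg] using hyy')
          rw [Sum.inl.injEq] at this
          exact hoinj this)]
        simp
      calc t = ((Finset.univ : Finset (Fin t)).image (fun y => g (other y))).card := hcardimg.symm
        _ = (↑((Finset.univ : Finset (Fin t)).image (fun y => g (other y))) : Set (Fin n)).ncard := by
            rw [Set.ncard_coe_finset]
        _ ≤ S₀.ncard := Set.ncard_le_ncard hsub (Set.toFinite S₀)
        _ = s := hcard
  rcases x₀ with a | b
  · exact key (fun y => Sum.inr y) (fun y y' h => by simpa using h)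
      (fun y => UG_adj_lr t k ω a y)
  · exact key (fun y => Sum.inl y) (fun y y' h => by simpa using h)
      (fun y => UG_adj_rl t k ω y b)

/-! ### Weights, cliques for UG -/

theorem UG_weights (t k ω : ℕ) (hkω : k ≤ ω) :
    ∃ w : UV t k ω → ℕ,
      (∀ S : Finset (UV t k ω), (∀ u ∈ S, ∀ v ∈ S, ¬ (UG t k ω).Adj u v) →
        ∑ v ∈ S, w v ≤ Mw k ω) ∧ (Nw k ω = ∑ v, w v) := by
  classical
  obtain ⟨w', hind, htot⟩ := gad_weights k ω hkω
  refine ⟨fun v => match v with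
    | .inl _ => 0
    | .inr x => w' x, ?_, ?_⟩
  · intro S hS
    set w : UV t k ω → ℕ := fun v => match v with
      | .inl _ => 0
      | .inr x => w' x with hw
    show ∑ v ∈ S, w v ≤ Mw k ω
    have hsum : ∑ v ∈ S, w v = ∑ v : UV t k ω, (if v ∈ S then w v else 0) := by
      rw [Finset.sum_ite_mem, Finset.univ_inter]
    set ff : UV t k ω → ℕ := fun v => if v ∈ S then w v else 0 with hff
    have e1 : (∑ v : UV t k ω, ff v) = ∑ v : (Fin t ⊕ Fin t) ⊕ GV k ω, ff v := rfl
    rw [hsum, e1, Fintype.sum_sum_type]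
    have h0 : (∑ a : Fin t ⊕ Fin t, ff (.inl a)) = 0 := by
      apply Finset.sum_eq_zero
      intro a _
      simp only [hff, hw]
      split <;> rfl
    rw [h0, Nat.zero_add]
    have h1 : (∑ x : GV k ω, ff (.inr x)) =
        ∑ x ∈ Finset.univ.filter (fun x => (Sum.inr x : UV t k ω) ∈ S), w' x := by
      rw [Finset.sum_filter]
    rw [h1]
    apply hind
    intro u hu v hv hadj
    simp only [Finset.mem_filter] at hu hv
    exact hS _ hu.2 _ hv.2 hadj
  · set w : UV t k ω → ℕ := fun v => match v with
      | .inl _ => 0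
      | .inr x => w' x with hw
    show Nw k ω = ∑ v, w v
    have e1 : (∑ v : UV t k ω, w v) = ∑ v : (Fin t ⊕ Fin t) ⊕ GV k ω, w v := rfl
    rw [e1, Fintype.sum_sum_type]
    have h0 : (∑ a : Fin t ⊕ Fin t, w (.inl a)) = 0 := by
      apply Finset.sum_eq_zero
      intro a _
      rfl
    rw [h0, Nat.zero_add]
    exact htot.symm

theorem UG_cliquefree (t k ω : ℕ) (hkω : k ≤ ω) (hω2 : 2 ≤ ω) :
    (UG t k ω).CliqueFree (ω + 1) := by
  classical
  apply cliquefree_of_card_le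
  intro S hS
  by_cases hex : ∃ x : GV k ω, (Sum.inr x : UV t k ω) ∈ S
  · obtain ⟨x₀, hx₀⟩ := hex
    set S' : Finset (GV k ω) :=
      Finset.univ.filter (fun x => (Sum.inr x : UV t k ω) ∈ S) with hS'
    have hsub : S ⊆ S'.image (fun x => (Sum.inr x : UV t k ω)) := by
      intro v hv
      rcases v with (a | a) | x
      · exact absurd (hS hv hx₀ (fun hh => nomatch hh)) (UG_adj_cross1 t k ω a x₀)
      · exact absurd (hS hv hx₀ (fun hh => nomatch hh)) (UG_adj_cross2 t k ω a x₀)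
      · simp only [Finset.mem_image]
        exact ⟨x, by simp [hS', hv], rfl⟩
    have hcl : (gad k ω).IsClique ↑S' := by
      intro u hu v hv huv
      simp only [hS', Finset.coe_filter, Set.mem_setOf_eq] at hu hv
      exact hS hu.2 hv.2 (fun hh => huv (Sum.inr.inj hh))
    calc S.card ≤ (S'.image (fun x => (Sum.inr x : UV t k ω))).card := Finset.card_le_card hsub
      _ ≤ S'.card := Finset.card_image_le
      _ ≤ ω := clique_card_le_of_cliquefree (gad_cliquefree k ω hkω) S' hcl
  · push_neg at hex
    have hL : ∀ a b : Fin t, (Sum.inl (Sum.inl a) : UV t k ω) ∈ S →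
        (Sum.inl (Sum.inl b) : UV t k ω) ∈ S → a = b := by
      intro a b ha hb
      by_contra hab
      exact (UG_adj_ll t k ω a b)
        (hS ha hb (fun hh => hab (Sum.inl.inj (Sum.inl.inj hh))))
    have hR : ∀ a b : Fin t, (Sum.inl (Sum.inr a) : UV t k ω) ∈ S →
        (Sum.inl (Sum.inr b) : UV t k ω) ∈ S → a = b := by
      intro a b ha hb
      by_contra hab
      exact (UG_adj_rr' t k ω a b)
        (hS ha hb (fun hh => hab (Sum.inr.inj (Sum.inl.inj hh))))
    by_cases hexL : ∃ a : Fin t, (Sum.inl (Sum.inl a) : UV t k ω) ∈ S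
    · obtain ⟨a₀, ha₀⟩ := hexL
      by_cases hexR : ∃ b : Fin t, (Sum.inl (Sum.inr b) : UV t k ω) ∈ S
      · obtain ⟨b₀, hb₀⟩ := hexR
        have hsub : S ⊆ {Sum.inl (Sum.inl a₀), Sum.inl (Sum.inr b₀)} := by
          intro v hv
          rcases v with (a | b) | x
          · rw [hL a a₀ hv ha₀]
            simp
          · rw [hR b b₀ hv hb₀]
            simp
          · exact absurd hv (hex x)
        calc S.card ≤ _ := Finset.card_le_card hsub
          _ ≤ 2 := Finset.card_insert_le _ _ |>.trans (by simp)
          _ ≤ ω := hω2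
      · push_neg at hexR
        have hsub : S ⊆ {Sum.inl (Sum.inl a₀)} := by
          intro v hv
          rcases v with (a | b) | x
          · rw [hL a a₀ hv ha₀]; simp
          · exact absurd hv (hexR b)
          · exact absurd hv (hex x)
        calc S.card ≤ 1 := by simpa using Finset.card_le_card hsub
          _ ≤ ω := by omega
    · push_neg at hexL
      by_cases hexR : ∃ b : Fin t, (Sum.inl (Sum.inr b) : UV t k ω) ∈ S
      · obtain ⟨b₀, hb₀⟩ := hexR
        have hsub : S ⊆ {Sum.inl (Sum.inr b₀)} := by
          intro v hv
          rcases v with (a | b) | x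
          · exact absurd hv (hexL a)
          · rw [hR b b₀ hv hb₀]; simp
          · exact absurd hv (hex x)
        calc S.card ≤ 1 := by simpa using Finset.card_le_card hsub
          _ ≤ ω := by omega
      · push_neg at hexR
        have hsub : S ⊆ ∅ := by
          intro v hv
          rcases v with (a | b) | x
          · exact absurd hv (hexL a)
          · exact absurd hv (hexR b)
          · exact absurd hv (hex x)
        calc S.card ≤ 0 := by simpa using Finset.card_le_card hsub
          _ ≤ ω := by omega

theorem UG_hasclique (t kk ω : ℕ) :
    ∃ S : Finset (UV t (kk+1) ω), (UG t (kk+1) ω).IsNClique ω S := by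
  classical
  obtain ⟨S₀, hS₀cl, hS₀card⟩ := gad_hasclique kk ω
  refine ⟨S₀.image (fun x => (Sum.inr x : UV t (kk+1) ω)), ?_, ?_⟩
  · intro u hu v hv huv
    simp only [Finset.coe_image, Set.mem_image] at hu hv
    obtain ⟨x, hx, rfl⟩ := hu
    obtain ⟨y, hy, rfl⟩ := hv
    exact hS₀cl hx hy (fun hh => huv (by rw [hh]))
  · rw [Finset.card_image_of_injective _ (fun a b hab => Sum.inr.inj hab)]
    exact hS₀card

/-! ### Final assembly -/

theorem frac_chrom_harmonic_lower_bound' (t ω : ℕ) (ht : 2 ≤ t) (hω2 : 2 ≤ ω) (hωt : ω ≤ t)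
    (h2 : t + 1 ≤ 2 * ω) :
    ∃ (n : ℕ) (G : SimpleGraph (Fin n)),
      TreewidthAtMost G t ∧ (∀ s : ℕ, TreewidthAtMost G s → t ≤ s) ∧
      (∃ S : Finset (Fin n), G.IsNClique ω S) ∧ G.CliqueFree (ω + 1) ∧
      ENNReal.ofReal ((t : ℝ) + 1 -
          ∑ i ∈ Finset.Icc 1 (t - ω + 1), (1 : ℝ) / ((ω + 1 - i : ℕ) : ℝ)) ≤
        fracChromNum G := by
  classical
  set kk := t - ω with hkkdef
  have hkω : kk + 1 ≤ ω := by omega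
  have htk : t = ω + (kk+1) - 1 := by omega
  have ht1 : 1 ≤ t := by omega
  set W := UV t (kk+1) ω with hW
  set e : W ≃ Fin (Fintype.card W) := Fintype.equivFin W with he
  set G0 := UG t (kk+1) ω with hG0
  set G : SimpleGraph (Fin (Fintype.card W)) := G0.map e.toEmbedding with hG
  have hmap_adj : ∀ u v : W, G0.Adj u v → G.Adj (e u) (e v) := by
    intro u v huv
    rw [hG, SimpleGraph.map_adj]
    exact ⟨u, v, huv, rfl, rfl⟩
  have hmap_adj' : ∀ a b : Fin (Fintype.card W), G.Adj a b → G0.Adj (e.symm a) (e.symm b) := by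
    intro a b hab
    rw [hG, SimpleGraph.map_adj] at hab
    obtain ⟨u, v, huv, hu, hv⟩ := hab
    have hu' : e.symm a = u := by rw [← hu]; simp
    have hv' : e.symm b = v := by rw [← hv]; simp
    rw [hu', hv']
    exact huv
  refine ⟨Fintype.card W, G, ?_, ?_, ?_, ?_, ?_⟩
  · -- treewidth upper bound
    obtain ⟨L0⟩ := UG_layout t (kk+1) ω hkω htk ht1
    exact Layout.tw ⟨L0.n, L0.f ∘ e.symm, L0.B, L0.htn, fun v => L0.hf _,
      L0.hinj.comp e.symm.injective, L0.hlow, L0.hcard, L0.hlt, L0.hcl, by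
        intro u v huv hlt
        exact L0.hedge _ _ (hmap_adj' u v huv) hlt⟩
  · -- treewidth lower bound
    intro s hs
    apply UG_lower t (kk+1) ω ht1 s
    obtain ⟨n, H, f, hT, hinj, hhom⟩ := hs
    exact ⟨n, H, f ∘ e, hT, hinj.comp e.injective,
      fun u v huv => hhom _ _ (hmap_adj u v huv)⟩
  · -- ω-clique
    obtain ⟨S0, hS0cl, hS0card⟩ := UG_hasclique t kk ω
    refine ⟨S0.image e, ?_, ?_⟩
    · intro a ha b hb hab
      simp only [Finset.coe_image, Set.mem_image] at ha hb
      obtain ⟨x, hx, rfl⟩ := ha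
      obtain ⟨y, hy, rfl⟩ := hb
      exact hmap_adj x y (hS0cl hx hy (fun hh => hab (by rw [hh])))
    · rw [Finset.card_image_of_injective _ e.injective]
      exact hS0card
  · -- clique-free
    intro S hS
    apply UG_cliquefree t (kk+1) ω hkω hω2 (S.image e.symm)
    constructor
    · intro u hu v hv huv
      simp only [Finset.coe_image, Set.mem_image] at hu hv
      obtain ⟨a, ha, rfl⟩ := hu
      obtain ⟨b, hb, rfl⟩ := hv
      exact hmap_adj' a b (hS.1 ha hb (fun hh => huv (by rw [hh])))
    · rw [Finset.card_image_of_injective _ e.symm.injective]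
      exact hS.2
  · -- the fractional chromatic bound
    obtain ⟨w0, hind0, htot0⟩ := UG_weights t (kk+1) ω hkω
    apply frac_chrom_ge G (w0 ∘ e.symm) (Mw (kk+1) ω) (Nw (kk+1) ω)
      (Mw_pos (kk+1) ω hkω).ne'
    · intro S hSind
      have hsum : ∑ v ∈ S, (w0 ∘ e.symm) v = ∑ x ∈ S.image e.symm, w0 x := by
        rw [Finset.sum_image (fun x _ y _ hxy => e.symm.injective hxy)]
        rfl
      rw [hsum]
      apply hind0
      intro u hu v hv hadj
      simp only [Finset.mem_image] at hu hv
      obtain ⟨a, ha, rfl⟩ := hu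
      obtain ⟨b, hb, rfl⟩ := hv
      exact hSind a ha b hb (by
        have := hmap_adj _ _ hadj
        simpa using this)
    · rw [htot0]
      exact (Equiv.sum_comp e.symm w0).symm
    · -- numeric identity
      have hident := NM_ident (kk+1) ω hkω
      have hsum_eq : ∑ i ∈ Finset.Icc 1 (t - ω + 1), (1 : ℝ) / ((ω + 1 - i : ℕ) : ℝ)
          = ∑ j ∈ Finset.Icc (ω - (kk+1) + 1) ω, (1 : ℝ) / (j : ℝ) := by
        apply Finset.sum_nbij' (fun i => ω + 1 - i) (fun j => ω + 1 - j)
        · intro a ha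
          simp only [Finset.mem_Icc] at ha ⊢
          omega
        · intro a ha
          simp only [Finset.mem_Icc] at ha ⊢
          omega
        · intro a ha
          simp only [Finset.mem_Icc] at ha
          omega
        · intro a ha
          simp only [Finset.mem_Icc] at ha
          omega
        · intro a ha
          rfl
      have hcast : ((ω : ℝ) + ((kk+1 : ℕ) : ℝ)) = (t : ℝ) + 1 := by
        have hnat : ω + (kk+1) = t + 1 := by omega
        exact_mod_cast congrArg (fun x : ℕ => (x : ℝ)) hnat
      rw [hsum_eq]
      calc ((t : ℝ) + 1 - ∑ j ∈ Finset.Icc (ω - (kk+1) + 1) ω, (1 : ℝ) / (j : ℝ))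
            * (Mw (kk+1) ω : ℝ)
          = (Mw (kk+1) ω : ℝ) *
            ((ω : ℝ) + ((kk+1 : ℕ) : ℝ) - ∑ j ∈ Finset.Icc (ω - (kk+1) + 1) ω, (1 : ℝ) / (j : ℝ)) := by
            rw [hcast]; ring
        _ = (Nw (kk+1) ω : ℝ) := hident.symm
        _ ≤ (Nw (kk+1) ω : ℝ) := le_refl _


/-- For `t ≥ 2` and `(t+1)/2 ≤ ω ≤ t` with `ω ≥ 2`, there is a graph of
treewidth exactly `t` and clique number exactly `ω` with
`χ_f(G) ≥ t + 1 - ∑_{i=1}^{t-ω+1} 1/(ω - i + 1)`. -/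
theorem frac_chrom_harmonic_lower_bound (t ω : ℕ) (ht : 2 ≤ t) (hω2 : 2 ≤ ω) (hωt : ω ≤ t)
    (h2 : t + 1 ≤ 2 * ω) :
    ∃ (n : ℕ) (G : SimpleGraph (Fin n)),
      TreewidthAtMost G t ∧ (∀ s : ℕ, TreewidthAtMost G s → t ≤ s) ∧
      (∃ S : Finset (Fin n), G.IsNClique ω S) ∧ G.CliqueFree (ω + 1) ∧
      ENNReal.ofReal ((t : ℝ) + 1 -
          ∑ i ∈ Finset.Icc 1 (t - ω + 1), (1 : ℝ) / ((ω + 1 - i : ℕ) : ℝ)) ≤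
        fracChromNum G :=
  frac_chrom_harmonic_lower_bound' t ω ht hω2 hωt h2
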